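/- Let H be a real Hilbert space, p > 1, and let ℓ' : ℝ → ℝ be given by a power series ℓ'(a) = Σ_{n=0}^∞ γ_n a^n, with ℓ'₊(a) := Σ_{n=0}^∞ |γ_n| a^n. Let y ∈ {−1, +1}, let w ∈ H with ‖w‖² ≤ B_w, and on a probability space let N be a random variable taking values in the nonnegative integers with P(N = n) = (p−1)/p^{n+1} for every n ∈ ℕ, and let (Φ_j)_{j≥1} be i.i.d. H-valued Bochner-integrable random vectors, independent of N, with E[Φ_1] = ψ and E[‖Φ_1‖²] ≤ B_Ψ, where ℓ'₊(√(p·B_w·B_Ψ)) < ∞. Define g̃ := y · γ_N · (p^{N+1}/(p−1)) · ∏_{j=1}^N (y·⟨w, Φ_j⟩). Then g̃ is integrable and E[g̃] = y · ℓ'(y·⟨w, ψ⟩). -/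

import Mathlib

open MeasureTheory ProbabilityTheory
open scoped ENNReal RealInnerProductSpace

private lemma indep_prod_integral {Ω : Type*} [MeasurableSpace Ω] {μ : Measure Ω}
    [IsProbabilityMeasure μ] (Z : ℕ → Ω → ℝ)
    (hInd : iIndepFun Z μ) (hm : ∀ j, Measurable (Z j))
    (hint : ∀ j, Integrable (Z j) μ) (n : ℕ) :
    Integrable (fun ω => ∏ j ∈ Finset.range n, Z j ω) μ ∧
      ∫ ω, ∏ j ∈ Finset.range n, Z j ω ∂μ = ∏ j ∈ Finset.range n, ∫ ω, Z j ω ∂μ := by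
  induction n with
  | zero => simp
  | succ n ih =>
    have hdep : IndepFun (∏ j ∈ Finset.range n, Z j) (Z n) μ :=
      hInd.indepFun_prod_range_succ hm n
    have he : (∏ j ∈ Finset.range n, Z j) = fun ω => ∏ j ∈ Finset.range n, Z j ω := by
      funext ω; exact Finset.prod_apply ω _ _
    rw [he] at hdep
    have h1 : Integrable (fun ω => (∏ j ∈ Finset.range n, Z j ω) * Z n ω) μ :=
      hdep.integrable_mul ih.1 (hint n)
    have h2 : (∫ ω, (∏ j ∈ Finset.range n, Z j ω) * Z n ω ∂μ)
        = (∫ ω, ∏ j ∈ Finset.range n, Z j ω ∂μ) * ∫ ω, Z n ω ∂μ :=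
      hdep.integral_fun_mul_eq_mul_integral ih.1.aestronglyMeasurable (hint n).aestronglyMeasurable
    constructor
    · simpa [Finset.prod_range_succ] using h1
    · simp only [Finset.prod_range_succ]
      rw [h2, ih.2]

/-- **Lemma 2 (unbiasedness of `Grad_Length_Estimate`).** Fix `p > 1` and a power
series `ℓ'(a) = Σ γ_n aⁿ`. Let `y ∈ {-1, +1}`, `w` in a real Hilbert space with
`‖w‖² ≤ B_w`, `N` geometric with parameter `p`, and `(Φ_j)` i.i.d. integrable
`H`-valued random vectors independent of `N` with `E[Φ₁] = ψ`, `E[‖Φ₁‖²] ≤ B_Ψ`, and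
`ℓ'₊(√(p·B_w·B_Ψ)) < ∞`. Then
`g̃ = y · γ_N · (p^(N+1)/(p-1)) · ∏_{j=1}^N (y·⟨w, Φ_j⟩)` is integrable and
`E[g̃] = y · ℓ'(y·⟨w, ψ⟩)`. -/
theorem grad_length_estimate_unbiased
    {Ω : Type*} [MeasurableSpace Ω] (μ : Measure Ω) [IsProbabilityMeasure μ]
    {H : Type*} [NormedAddCommGroup H] [InnerProductSpace ℝ H] [CompleteSpace H]
    [MeasurableSpace H] [BorelSpace H]
    (p : ℝ) (hp : 1 < p)
    (l' : ℝ → ℝ) (γ : ℕ → ℝ) (hl' : ∀ a : ℝ, l' a = ∑' n : ℕ, γ n * a ^ n)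
    (y : ℝ) (hy : y = 1 ∨ y = -1)
    (w : H) (Bw : ℝ) (hw : ‖w‖ ^ 2 ≤ Bw)
    (N : Ω → ℕ) (hN : Measurable N)
    (hNdist : ∀ n : ℕ, μ {ω | N ω = n} = ENNReal.ofReal ((p - 1) / p ^ (n + 1)))
    (Φ : ℕ → Ω → H) (hΦm : ∀ j, Measurable (Φ j))
    (hΦindep : iIndepFun Φ μ)
    (hΦid : ∀ j, μ.map (Φ j) = μ.map (Φ 0))
    (hNΦ : IndepFun N (fun ω => fun j => Φ j ω) μ)
    (ψ : H) (hΦint : Integrable (Φ 0) μ) (hΦmean : ∫ ω, Φ 0 ω ∂μ = ψ)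
    (BΨ : ℝ) (hΦsq : Integrable (fun ω => ‖Φ 0 ω‖ ^ 2) μ)
    (hΦ2 : ∫ ω, ‖Φ 0 ω‖ ^ 2 ∂μ ≤ BΨ)
    (hplus : Summable (fun n : ℕ => |γ n| * Real.sqrt (p * Bw * BΨ) ^ n)) :
    Integrable (fun ω => y * γ (N ω) * (p ^ (N ω + 1) / (p - 1)) *
      ∏ j ∈ Finset.range (N ω), (y * ⟪w, Φ j ω⟫)) μ ∧
    ∫ ω, y * γ (N ω) * (p ^ (N ω + 1) / (p - 1)) *
        ∏ j ∈ Finset.range (N ω), (y * ⟪w, Φ j ω⟫) ∂μ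
      = y * l' (y * ⟪w, ψ⟫) := by
  -- basic facts
  have hp0 : (0:ℝ) < p := lt_trans one_pos hp
  have hp1 : (0:ℝ) < p - 1 := by linarith
  have hy1 : |y| = 1 := by rcases hy with h | h <;> simp [h]
  have hBw0 : (0:ℝ) ≤ Bw := le_trans (sq_nonneg _) hw
  have hBΨ0 : (0:ℝ) ≤ BΨ := le_trans (integral_nonneg fun ω => sq_nonneg _) hΦ2
  set a : ℝ := y * ⟪w, ψ⟫ with ha
  set M : ℝ := Real.sqrt Bw * Real.sqrt BΨ with hM
  have hM0 : (0:ℝ) ≤ M := mul_nonneg (Real.sqrt_nonneg _) (Real.sqrt_nonneg _)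
  have hMle : M ≤ Real.sqrt (p * Bw * BΨ) := by
    rw [hM, Real.sqrt_mul (by positivity : (0:ℝ) ≤ p * Bw), Real.sqrt_mul hp0.le]
    have h1 : (1:ℝ) ≤ Real.sqrt p := by
      rw [show (1:ℝ) = Real.sqrt 1 from (Real.sqrt_one).symm]
      exact Real.sqrt_le_sqrt hp.le
    nlinarith [Real.sqrt_nonneg Bw, Real.sqrt_nonneg BΨ]
  -- abbreviations
  set X : ℕ → Ω → ℝ := fun j ω => y * ⟪w, Φ j ω⟫ with hXdef
  set c : ℕ → ℝ := fun n => y * γ n * (p ^ (n + 1) / (p - 1)) with hcdef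
  set g : ℕ → Ω → ℝ := fun n ω => c n * ∏ j ∈ Finset.range n, X j ω with hgdef
  set χ : ℕ → Ω → ℝ := fun n ω => if N ω = n then (1:ℝ) else 0 with hχdef
  set fn : ℕ → Ω → ℝ := fun n ω => χ n ω * g n ω with hfndef
  -- continuity / measurability
  have hXc : Continuous (fun v : H => y * ⟪w, v⟫) :=
    continuous_const.mul (Continuous.inner continuous_const continuous_id)
  have hXm : ∀ j, Measurable (X j) := fun j => hXc.measurable.comp (hΦm j)
  have hFvec : Measurable (fun ω => fun j => Φ j ω) :=
    measurable_pi_lambda _ hΦm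
  have hGm : ∀ n, Measurable (fun v : ℕ → H => c n * ∏ j ∈ Finset.range n, (y * ⟪w, v j⟫)) := by
    intro n
    exact measurable_const.mul (Finset.measurable_prod _ (fun j _ =>
      hXc.measurable.comp (measurable_pi_apply j)))
  have hgm : ∀ n, Measurable (g n) := fun n => (hGm n).comp hFvec
  have hχm : ∀ n, Measurable (χ n) := fun n =>
    (Measurable.of_discrete (f := fun k : ℕ => if k = n then (1:ℝ) else 0)).comp hN
  have hfnm : ∀ n, Measurable (fn n) := fun n => (hχm n).mul (hgm n)
  -- distributional transfer
  have key : ∀ (F : H → ℝ), Continuous F → ∀ j, ∫ ω, F (Φ j ω) ∂μ = ∫ ω, F (Φ 0 ω) ∂μ := by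
    intro F hF j
    rw [← integral_map (hΦm j).aemeasurable hF.aestronglyMeasurable, hΦid j,
      integral_map (hΦm 0).aemeasurable hF.aestronglyMeasurable]
  have keyInt : ∀ (F : H → ℝ), Continuous F → ∀ j,
      Integrable (fun ω => F (Φ j ω)) μ ↔ Integrable (fun ω => F (Φ 0 ω)) μ := by
    intro F hF j
    have h1 := integrable_map_measure (μ := μ) (f := Φ j) (g := F)
      hF.aestronglyMeasurable (hΦm j).aemeasurable
    have h2 := integrable_map_measure (μ := μ) (f := Φ 0) (g := F)
      hF.aestronglyMeasurable (hΦm 0).aemeasurable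
    rw [hΦid j] at h1
    exact h1.symm.trans h2
  -- integrability and moments of X j
  have hX0int : Integrable (X 0) μ := (hΦint.const_inner w).const_mul y
  have hXint : ∀ j, Integrable (X j) μ := fun j => (keyInt _ hXc j).mpr hX0int
  have hXa : ∀ j, ∫ ω, X j ω ∂μ = a := by
    intro j
    rw [show (∫ ω, X j ω ∂μ) = ∫ ω, X 0 ω ∂μ from key _ hXc j]
    rw [hXdef]
    simp only
    rw [integral_const_mul, integral_inner hΦint, hΦmean, ha]
  -- mean of the norm
  have hnormint : Integrable (fun ω => ‖Φ 0 ω‖) μ := hΦint.norm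
  have hm0 : (0:ℝ) ≤ ∫ ω, ‖Φ 0 ω‖ ∂μ := integral_nonneg fun ω => norm_nonneg _
  have hmsq : (∫ ω, ‖Φ 0 ω‖ ∂μ) ^ 2 ≤ ∫ ω, ‖Φ 0 ω‖ ^ 2 ∂μ := by
    set m := ∫ ω, ‖Φ 0 ω‖ ∂μ with hmdef
    have h1 : (0:ℝ) ≤ ∫ ω, (‖Φ 0 ω‖ - m) ^ 2 ∂μ := integral_nonneg fun ω => sq_nonneg _
    have h2 : ∫ ω, (‖Φ 0 ω‖ - m) ^ 2 ∂μ = (∫ ω, ‖Φ 0 ω‖ ^ 2 ∂μ) - m ^ 2 := by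
      have e : (fun ω => (‖Φ 0 ω‖ - m) ^ 2)
          = fun ω => (‖Φ 0 ω‖ ^ 2 - (2 * m) * ‖Φ 0 ω‖) + m * m := by
        funext ω; ring
      have i2 : Integrable (fun ω => 2 * m * ‖Φ 0 ω‖) μ := hnormint.const_mul _
      have i3 : Integrable (fun ω => ‖Φ 0 ω‖ ^ 2 - 2 * m * ‖Φ 0 ω‖) μ := hΦsq.sub i2
      rw [e, integral_add i3 (integrable_const (m * m)),
        integral_sub hΦsq i2, integral_const_mul, integral_const]
      simp [measure_univ]
      ring
    linarith
  have hmean : ∫ ω, ‖Φ 0 ω‖ ∂μ ≤ Real.sqrt BΨ := by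
    have h : (∫ ω, ‖Φ 0 ω‖ ∂μ) ^ 2 ≤ BΨ := le_trans hmsq hΦ2
    calc ∫ ω, ‖Φ 0 ω‖ ∂μ = Real.sqrt ((∫ ω, ‖Φ 0 ω‖ ∂μ) ^ 2) := (Real.sqrt_sq hm0).symm
      _ ≤ Real.sqrt BΨ := Real.sqrt_le_sqrt h
  have hwle : ‖w‖ ≤ Real.sqrt Bw := by
    calc ‖w‖ = Real.sqrt (‖w‖ ^ 2) := (Real.sqrt_sq (norm_nonneg _)).symm
      _ ≤ Real.sqrt Bw := Real.sqrt_le_sqrt hw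
  have hXabs : ∀ j, ∫ ω, |X j ω| ∂μ ≤ M := by
    intro j
    have hFc : Continuous (fun v : H => |y * ⟪w, v⟫|) := hXc.abs
    rw [show (∫ ω, |X j ω| ∂μ) = ∫ ω, |X 0 ω| ∂μ from key _ hFc j]
    have hle : ∀ ω, |X 0 ω| ≤ ‖w‖ * ‖Φ 0 ω‖ := by
      intro ω
      rw [hXdef]
      simp only
      rw [abs_mul, hy1, one_mul]
      exact abs_real_inner_le_norm w _
    calc ∫ ω, |X 0 ω| ∂μ ≤ ∫ ω, ‖w‖ * ‖Φ 0 ω‖ ∂μ :=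
          integral_mono hX0int.abs (hnormint.const_mul _) hle
      _ = ‖w‖ * ∫ ω, ‖Φ 0 ω‖ ∂μ := integral_const_mul _ _
      _ ≤ Real.sqrt Bw * Real.sqrt BΨ :=
          mul_le_mul hwle hmean hm0 (Real.sqrt_nonneg _)
      _ = M := hM.symm
  -- independence of the X's and their absolute values
  have hXindep : iIndepFun X μ :=
    hΦindep.comp (fun _ => fun v => y * ⟪w, v⟫) (fun _ => hXc.measurable)
  have hXabsindep : iIndepFun (fun j ω => |X j ω|) μ :=
    hXindep.comp (fun _ => fun t => |t|) (fun _ => continuous_abs.measurable)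
  have hprod := indep_prod_integral X hXindep hXm hXint
  have hprodabs := indep_prod_integral (fun j ω => |X j ω|) hXabsindep
    (fun j => (hXm j).abs) (fun j => (hXint j).abs)
  -- integrability and integral of g n
  have hgint : ∀ n, Integrable (g n) μ := fun n => ((hprod n).1.const_mul (c n))
  have hgeq : ∀ n, ∫ ω, g n ω ∂μ = c n * a ^ n := by
    intro n
    rw [hgdef]
    simp only
    rw [integral_const_mul, (hprod n).2]
    congr 1
    rw [Finset.prod_congr rfl (fun j _ => hXa j), Finset.prod_const, Finset.card_range]
  have hgabsint : ∀ n, Integrable (fun ω => |g n ω|) μ := fun n => (hgint n).abs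
  have hgabseq : ∀ n, ∫ ω, |g n ω| ∂μ ≤ |c n| * M ^ n := by
    intro n
    have e : (fun ω => |g n ω|) = fun ω => |c n| * ∏ j ∈ Finset.range n, |X j ω| := by
      funext ω
      rw [hgdef]
      simp only
      rw [abs_mul, Finset.abs_prod]
    rw [e, integral_const_mul, (hprodabs n).2]
    have hb : ∏ j ∈ Finset.range n, (∫ ω, |X j ω| ∂μ) ≤ M ^ n := by
      calc ∏ j ∈ Finset.range n, (∫ ω, |X j ω| ∂μ)
          ≤ ∏ j ∈ Finset.range n, M :=
            Finset.prod_le_prod (fun j _ => integral_nonneg fun ω => abs_nonneg _)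
              (fun j _ => hXabs j)
        _ = M ^ n := by rw [Finset.prod_const, Finset.card_range]
    have hcn : (0:ℝ) ≤ |c n| := abs_nonneg _
    exact mul_le_mul_of_nonneg_left hb hcn
  -- independence of χ n and functions of the Φ's
  have hindχg : ∀ n, IndepFun (χ n) (g n) μ := by
    intro n
    exact hNΦ.comp (Measurable.of_discrete (f := fun k : ℕ => if k = n then (1:ℝ) else 0))
      (hGm n)
  have hindχgabs : ∀ n, IndepFun (χ n) (fun ω => |g n ω|) μ := by
    intro n
    exact hNΦ.comp (Measurable.of_discrete (f := fun k : ℕ => if k = n then (1:ℝ) else 0))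
      ((hGm n).abs)
  -- the expectation of χ n
  have hPn0 : ∀ n : ℕ, (0:ℝ) ≤ (p - 1) / p ^ (n + 1) := by
    intro n; exact le_of_lt (div_pos hp1 (pow_pos hp0 _))
  have hχeq : ∀ n, ∫ ω, χ n ω ∂μ = (p - 1) / p ^ (n + 1) := by
    intro n
    have hs : MeasurableSet {ω | N ω = n} := hN (measurableSet_singleton n)
    have e : χ n = Set.indicator {ω | N ω = n} (fun _ => (1:ℝ)) := by
      funext ω
      by_cases h : N ω = n <;> simp [hχdef, Set.indicator, h]
    rw [e, integral_indicator_const (1:ℝ) hs, measureReal_def, hNdist n, smul_eq_mul, mul_one,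
      ENNReal.toReal_ofReal (hPn0 n)]
  -- integral of fn n
  have hfneq : ∀ n, ∫ ω, fn n ω ∂μ = ((p - 1) / p ^ (n + 1)) * (c n * a ^ n) := by
    intro n
    have h := (hindχg n).integral_fun_mul_eq_mul_integral (hχm n).aestronglyMeasurable
      (hgm n).aestronglyMeasurable
    rw [hfndef]
    simp only
    rw [h, hχeq n, hgeq n]
  -- integrability of fn n
  have hfnint : ∀ n, Integrable (fn n) μ := by
    intro n
    refine Integrable.bdd_mul (hgint n) (hχm n).aestronglyMeasurable (c := 1) (Filter.Eventually.of_forall fun ω => ?_)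
    rw [hχdef]
    by_cases h : N ω = n <;> simp [h]
  -- bound on the L¹ norm of fn n
  have hfnbound : ∀ n, ∫⁻ ω, ‖fn n ω‖₊ ∂μ
      ≤ ENNReal.ofReal (|γ n| * Real.sqrt (p * Bw * BΨ) ^ n) := by
    intro n
    simp only [← enorm_eq_nnnorm]
    rw [← ofReal_integral_norm_eq_lintegral_enorm (hfnint n)]
    apply ENNReal.ofReal_le_ofReal
    have e : (fun ω => ‖fn n ω‖) = fun ω => χ n ω * |g n ω| := by
      funext ω
      rw [hfndef, hχdef]
      by_cases h : N ω = n <;> simp [h, Real.norm_eq_abs, abs_mul]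
    have h := (hindχgabs n).integral_fun_mul_eq_mul_integral (hχm n).aestronglyMeasurable
      (hgm n).abs.aestronglyMeasurable
    rw [e, h, hχeq n]
    have hcabs : |c n| = |γ n| * (p ^ (n + 1) / (p - 1)) := by
      rw [hcdef]
      simp only
      rw [abs_mul, abs_mul, hy1, one_mul, abs_of_pos (div_pos (pow_pos hp0 _) hp1)]
    calc ((p - 1) / p ^ (n + 1)) * ∫ ω, |g n ω| ∂μ
        ≤ ((p - 1) / p ^ (n + 1)) * (|c n| * M ^ n) :=
          mul_le_mul_of_nonneg_left (hgabseq n) (hPn0 n)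
      _ = |γ n| * M ^ n := by
          rw [hcabs]
          field_simp
      _ ≤ |γ n| * Real.sqrt (p * Bw * BΨ) ^ n :=
          mul_le_mul_of_nonneg_left (pow_le_pow_left₀ hM0 hMle n) (abs_nonneg _)
  have hfinsum : ∑' n, ∫⁻ ω, ‖fn n ω‖₊ ∂μ ≠ ∞ := by
    have h1 : ∑' n, ∫⁻ ω, ‖fn n ω‖₊ ∂μ
        ≤ ∑' n, ENNReal.ofReal (|γ n| * Real.sqrt (p * Bw * BΨ) ^ n) :=
      ENNReal.tsum_le_tsum hfnbound
    rw [← ENNReal.ofReal_tsum_of_nonneg (fun n => by positivity) hplus] at h1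
    exact (h1.trans_lt ENNReal.ofReal_lt_top).ne
  -- pointwise decomposition
  have hpt : ∀ ω, (y * γ (N ω) * (p ^ (N ω + 1) / (p - 1)) *
      ∏ j ∈ Finset.range (N ω), (y * ⟪w, Φ j ω⟫)) = ∑' n, fn n ω := by
    intro ω
    have h1 : ∑' n, fn n ω = fn (N ω) ω := by
      refine tsum_eq_single (N ω) (fun b hb => ?_)
      simp [hfndef, hχdef, Ne.symm hb]
    rw [h1, hfndef, hχdef, hgdef, hcdef]
    simp
    exact Or.inl rfl
  -- measurability of the main function
  have hfmeas : Measurable (fun ω => y * γ (N ω) * (p ^ (N ω + 1) / (p - 1)) *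
      ∏ j ∈ Finset.range (N ω), (y * ⟪w, Φ j ω⟫)) := by
    have h1 : Measurable (fun q : (ℕ → H) × ℕ =>
        c q.2 * ∏ j ∈ Finset.range q.2, (y * ⟪w, q.1 j⟫)) :=
      measurable_from_prod_countable_left (fun n => hGm n)
    exact h1.comp (hFvec.prodMk hN)
  -- integrability of the main function
  have hmain_int : Integrable (fun ω => y * γ (N ω) * (p ^ (N ω + 1) / (p - 1)) *
      ∏ j ∈ Finset.range (N ω), (y * ⟪w, Φ j ω⟫)) μ := by
    refine ⟨hfmeas.aestronglyMeasurable, ?_⟩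
    have hnn : ∀ ω, (‖y * γ (N ω) * (p ^ (N ω + 1) / (p - 1)) *
        ∏ j ∈ Finset.range (N ω), (y * ⟪w, Φ j ω⟫)‖₊ : ℝ≥0∞)
        = ∑' n, (‖fn n ω‖₊ : ℝ≥0∞) := by
      intro ω
      have h1 : ∑' n, (‖fn n ω‖₊ : ℝ≥0∞) = (‖fn (N ω) ω‖₊ : ℝ≥0∞) := by
        refine tsum_eq_single (N ω) (fun b hb => ?_)
        simp [hfndef, hχdef, Ne.symm hb]
      have h2 : (y * γ (N ω) * (p ^ (N ω + 1) / (p - 1)) *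
          ∏ j ∈ Finset.range (N ω), (y * ⟪w, Φ j ω⟫)) = fn (N ω) ω := by
        simp [hfndef, hχdef, hgdef, hcdef]
        exact Or.inl rfl
      rw [h1, h2]
    show (∫⁻ ω, (‖y * γ (N ω) * (p ^ (N ω + 1) / (p - 1)) *
        ∏ j ∈ Finset.range (N ω), (y * ⟪w, Φ j ω⟫)‖₊ : ℝ≥0∞) ∂μ) < ∞
    calc (∫⁻ ω, (‖y * γ (N ω) * (p ^ (N ω + 1) / (p - 1)) *
        ∏ j ∈ Finset.range (N ω), (y * ⟪w, Φ j ω⟫)‖₊ : ℝ≥0∞) ∂μ)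
        = ∫⁻ ω, ∑' n, (‖fn n ω‖₊ : ℝ≥0∞) ∂μ := lintegral_congr hnn
      _ = ∑' n, ∫⁻ ω, (‖fn n ω‖₊ : ℝ≥0∞) ∂μ :=
          lintegral_tsum (fun n => ((hfnm n).nnnorm.coe_nnreal_ennreal).aemeasurable)
      _ < ∞ := lt_top_iff_ne_top.mpr hfinsum
  refine ⟨hmain_int, ?_⟩
  have hne1 : p - 1 ≠ 0 := ne_of_gt hp1
  have h1 : (∫ ω, y * γ (N ω) * (p ^ (N ω + 1) / (p - 1)) *
      ∏ j ∈ Finset.range (N ω), (y * ⟪w, Φ j ω⟫) ∂μ) = ∫ ω, ∑' n, fn n ω ∂μ :=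
    integral_congr_ae (Filter.Eventually.of_forall fun ω => hpt ω)
  rw [h1, integral_tsum (fun n => (hfnm n).aestronglyMeasurable) hfinsum]
  have h2 : ∀ n, ∫ ω, fn n ω ∂μ = y * (γ n * a ^ n) := by
    intro n
    have hne2 : (p : ℝ) ^ (n + 1) ≠ 0 := pow_ne_zero _ (ne_of_gt hp0)
    rw [hfneq n, hcdef]
    simp only
    field_simp
  calc ∑' n, ∫ ω, fn n ω ∂μ = ∑' n, y * (γ n * a ^ n) := tsum_congr h2
    _ = y * ∑' n, (γ n * a ^ n) := tsum_mul_left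
    _ = y * l' a := by rw [hl' a]
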